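/- If I is a nil two-sided ideal of a ring R and R/I is right quasi-duo, then R is right quasi-duo. -/

import Mathlib

/-- A ring is right quasi-duo if every maximal right ideal (a coatom in the
lattice of right ideals, i.e. submodules of `R` over `Rᵐᵒᵖ`) is two-sided. -/
def RightQuasiDuo (R : Type*) [Ring R] : Prop :=
  ∀ I : Submodule Rᵐᵒᵖ R, IsCoatom I → ∀ r x : R, x ∈ I → r * x ∈ I

/-- A ring is left quasi-duo if every maximal left ideal is two-sided. -/
def LeftQuasiDuo (R : Type*) [Ring R] : Prop :=
  ∀ I : Submodule R R, IsCoatom I → ∀ r x : R, x ∈ I → x * r ∈ I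

theorem stmt12 (R S : Type*) [Ring R] [Ring S]
    (f : R →+* S) (hf : Function.Surjective f)
    (hnil : ∀ x : R, f x = 0 → IsNilpotent x)
    (hS : RightQuasiDuo S) : RightQuasiDuo R := by
  intro I hI r x hx
  have hker : ∀ k : R, f k = 0 → k ∈ I := by
    intro k hk
    by_contra hkI
    have hlt : I < I ⊔ Submodule.span Rᵐᵒᵖ {k} := by
      refine lt_of_le_of_ne le_sup_left fun h => hkI ?_
      rw [h]
      exact Submodule.mem_sup_right (Submodule.mem_span_singleton_self k)
    have htop := hI.2 _ hlt
    have h1 : (1 : R) ∈ I ⊔ Submodule.span Rᵐᵒᵖ {k} := htop ▸ Submodule.mem_top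
    rcases Submodule.mem_sup.mp h1 with ⟨i, hi, z, hz, hiz⟩
    rcases Submodule.mem_span_singleton.mp hz with ⟨c, rfl⟩
    have hfz : f (c • k) = 0 := by
      rw [MulOpposite.smul_eq_mul_unop, map_mul, hk, zero_mul]
    have hn : IsNilpotent (c • k) := hnil _ hfz
    have hiu : IsUnit i := by
      have hieq : i = 1 - c • k := eq_sub_of_add_eq hiz
      rw [hieq]
      exact hn.isUnit_one_sub
    rcases hiu with ⟨u, hu⟩
    apply hI.1
    rw [Submodule.eq_top_iff']
    intro y
    have hy : y = (MulOpposite.op ((↑u⁻¹ : R) * y)) • i := by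
      rw [MulOpposite.smul_eq_mul_unop, MulOpposite.unop_op, ← hu, ← mul_assoc]
      simp
    rw [hy]
    exact I.smul_mem _ hi
  let J : Submodule Sᵐᵒᵖ S :=
    { carrier := f '' I
      add_mem' := by
        rintro _ _ ⟨a, ha, rfl⟩ ⟨b, hb, rfl⟩
        exact ⟨a + b, I.add_mem ha hb, map_add f a b⟩
      zero_mem' := ⟨0, I.zero_mem, map_zero f⟩
      smul_mem' := by
        rintro c _ ⟨a, ha, rfl⟩
        obtain ⟨r', hr'⟩ := hf c.unop
        refine ⟨MulOpposite.op r' • a, I.smul_mem _ ha, ?_⟩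
        simp [MulOpposite.smul_eq_mul_unop, map_mul, hr'] }
  have hJ : IsCoatom J := by
    constructor
    · intro h
      have h1 : (1 : S) ∈ J := h ▸ Submodule.mem_top
      rcases h1 with ⟨a, ha, hfa⟩
      have h1I : (1 : R) ∈ I := by
        have hsub : f (a - 1) = 0 := by rw [map_sub, hfa, map_one, sub_self]
        have := I.sub_mem ha (hker _ hsub)
        simpa using this
      apply hI.1
      rw [Submodule.eq_top_iff']
      intro y
      have hy : y = (MulOpposite.op y) • (1 : R) := by
        simp [MulOpposite.smul_eq_mul_unop]
      rw [hy]
      exact I.smul_mem _ h1I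
    · intro K hK
      let K' : Submodule Rᵐᵒᵖ R :=
        { carrier := f ⁻¹' K
          add_mem' := by
            intro a b ha hb
            simp only [Set.mem_preimage, map_add] at *
            exact K.add_mem ha hb
          zero_mem' := by simp [K.zero_mem]
          smul_mem' := by
            intro c a ha
            simp only [Set.mem_preimage, MulOpposite.smul_eq_mul_unop, map_mul] at *
            exact K.smul_mem (MulOpposite.op (f c.unop)) ha }
      have hIK' : I < K' := by
        refine lt_of_le_not_ge (fun a ha => hK.le ⟨a, ha, rfl⟩) ?_
        intro hle
        obtain ⟨s, hsK, hsJ⟩ := SetLike.exists_of_lt hK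
        obtain ⟨a, rfl⟩ := hf s
        exact hsJ ⟨a, hle hsK, rfl⟩
      have htop := hI.2 _ hIK'
      have h1 : (1 : S) ∈ K := by
        have h1' : (1 : R) ∈ K' := htop ▸ Submodule.mem_top
        simpa [K'] using h1'
      rw [Submodule.eq_top_iff']
      intro s
      have hs : s = (MulOpposite.op s) • (1 : S) := by
        simp [MulOpposite.smul_eq_mul_unop]
      rw [hs]
      exact K.smul_mem _ h1
  have hrx : f (r * x) ∈ J := by
    rw [map_mul]
    exact hS J hJ (f r) (f x) ⟨x, hx, rfl⟩
  rcases hrx with ⟨y, hy, hfy⟩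
  have hd : f (r * x - y) = 0 := by rw [map_sub, hfy, sub_self]
  have := I.add_mem (hker _ hd) hy
  simpa using this
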